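/- The space $\mathcal{M}(d,r,D,n)$ of rank $r$, degree $-d$ subbundles of the evenly split bundle $Z_{D,n}$ on $\mathbb{P}^1$ is nonempty if and only if $H^1(\mathbb{P}^1,\mathcal{H}om(Z_{d,r},Z_{D-d,n-r}))=0$. -/
import Mathlib


/-!
STATEMENT 10. The moduli space `M(d,r,D,n)` of rank `r`, degree `-d` subbundles of the
evenly split bundle `Z_{D,n}` on `ℙ¹` is nonempty if and only if
`H¹(ℙ¹, Hom(Z_{d,r}, Z_{D-d,n-r})) = 0`.

Encoding.  Work on `ℙ¹` over `ℂ` with homogeneous coordinate ring `ℂ[X,Y]`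
(`MvPolynomial (Fin 2) ℂ`).  `Z_{a,m}` has splitting type `zs a m : Fin m → ℤ`, the evenly
split sequence summing to `-a`.  A subbundle `V ⊆ Z_{D,n}` of rank `r` and degree `-d` is
the same as a splitting type `v : Fin r → ℤ` with `∑ v = -d` together with a sheaf map
`⊕ O(v i) → ⊕ O(zs D n j)`, i.e. a matrix `M` whose `(j,i)` entry is homogeneous of degree
`zs D n j - v i` (zero if that degree is negative), which is injective on every fiber,
i.e. the evaluated scalar matrix has trivial kernel at every point `x ≠ 0` of `ℂ² - 0`.
The vanishing `H¹(ℙ¹, Hom(Z_{d,r}, Z_{D-d,n-r})) = 0` means every summand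
`O(zs (D-d) (n-r) u - zs d r i)` of the `Hom` bundle has degree `≥ -1`.
-/

/-- Splitting type of the evenly split bundle `Z_{a,m}` of degree `-a` and rank `m`. -/
def zs (a : ℤ) (m : ℕ) : Fin m → ℤ :=
  fun u => if (u : ℤ) < (-a) % m then (-a) / m + 1 else (-a) / m


lemma arith_fwd (d D : ℤ) (r n : ℕ) (hr : 0 < r) (hrn : r < n)
    (h1 : -d ≤ (r:ℤ) * ((-D)/(n:ℤ)) + (-D) % (n:ℤ))
    (h2 : -d ≤ (r:ℤ) * ((-D)/(n:ℤ)) + r) :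
    ∀ (i : Fin r) (u : Fin (n-r)), -1 ≤ zs (D - d) (n - r) u - zs d r i := by
  intro i u
  have hrz : (0:ℤ) < (r:ℤ) := by exact_mod_cast hr
  have hnz : (0:ℤ) < (n:ℤ) := by exact_mod_cast hr.trans hrn
  have hrn' : (r:ℤ) < (n:ℤ) := by exact_mod_cast hrn
  have hnrz : (0:ℤ) < ((n-r:ℕ):ℤ) := by exact_mod_cast Nat.sub_pos_of_lt hrn
  have hnrc : ((n-r:ℕ):ℤ) = (n:ℤ) - r := by omega
  set A := (-D)/(n:ℤ) with hA
  set ρ := (-D) % (n:ℤ) with hρ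
  set q := (-d)/(r:ℤ) with hq
  set rem := (-d) % (r:ℤ) with hrem
  have hd : (r:ℤ) * q + rem = -d := Int.mul_ediv_add_emod _ _
  have hD : (n:ℤ) * A + ρ = -D := Int.mul_ediv_add_emod _ _
  have hrem0 : 0 ≤ rem := Int.emod_nonneg _ (ne_of_gt hrz)
  have hrem1 : rem < r := Int.emod_lt_of_pos _ hrz
  have hρ0 : 0 ≤ ρ := Int.emod_nonneg _ (ne_of_gt hnz)
  have hρ1 : ρ < n := Int.emod_lt_of_pos _ hnz
  have hi0 : (0:ℤ) ≤ (i:ℤ) := by positivity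
  have hbz : zs d r i ≤ q + (if 0 < rem then 1 else 0) := by
    unfold zs
    rw [← hq, ← hrem]
    split_ifs <;> omega
  have hcz : (d - D)/(((n-r:ℕ)):ℤ) ≤ zs (D-d) (n-r) u := by
    have hnd : -(D - d) = d - D := by ring
    unfold zs
    rw [hnd]
    split_ifs <;> omega
  set t := q - A with ht
  have hb1 : (r:ℤ)*t = (r:ℤ)*q - (r:ℤ)*A := by ring
  have hb2 : (n:ℤ)*t = (n:ℤ)*q - (n:ℤ)*A := by ring
  have key : q + (if 0 < rem then 1 else 0) - 1 ≤ (d - D)/(((n-r:ℕ)):ℤ) := by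
    rw [Int.le_ediv_iff_mul_le hnrz, hnrc]
    split_ifs with hc
    · -- rem ≥ 1
      have e1 : (r:ℤ)*t ≤ ρ - rem := by linarith
      have e2 : (r:ℤ)*t ≤ (r:ℤ) - rem := by linarith
      have ht0 : t ≤ 0 := by
        by_contra hcon
        push_neg at hcon
        have : (r:ℤ)*1 ≤ (r:ℤ)*t :=
          mul_le_mul_of_nonneg_left (by omega) (le_of_lt hrz)
        linarith
      have hg : (q + 1 - 1) * ((n:ℤ) - r) = (n:ℤ)*q - (r:ℤ)*q := by ring
      rw [hg]
      rcases ht0.lt_or_eq with h' | h'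
      · have h5 : (n:ℤ)*t ≤ (n:ℤ)*(-1) :=
          mul_le_mul_of_nonneg_left (by omega) (le_of_lt hnz)
        linarith
      · have hz1 : (n:ℤ)*t = 0 := by rw [h', mul_zero]
        have hz2 : (r:ℤ)*t = 0 := by rw [h', mul_zero]
        linarith
    · -- rem = 0
      have hrem' : rem = 0 := by omega
      have e1 : (r:ℤ)*t ≤ ρ := by linarith
      have e2 : (r:ℤ)*t ≤ (r:ℤ) := by linarith
      have ht1 : t ≤ 1 := by
        by_contra hcon
        push_neg at hcon
        have : (r:ℤ)*2 ≤ (r:ℤ)*t :=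
          mul_le_mul_of_nonneg_left (by omega) (le_of_lt hrz)
        linarith
      have hg : (q + 0 - 1) * ((n:ℤ) - r) = (n:ℤ)*q - (r:ℤ)*q - (n:ℤ) + (r:ℤ) := by ring
      rw [hg]
      rcases (by omega : t ≤ 0 ∨ t = 1) with h' | h'
      · have h5 : (n:ℤ)*t ≤ 0 := mul_nonpos_of_nonneg_of_nonpos (le_of_lt hnz) h'
        linarith
      · have hz1 : (n:ℤ)*t = (n:ℤ) := by rw [h', mul_one]
        have hz2 : (r:ℤ)*t = (r:ℤ) := by rw [h', mul_one]
        linarith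
  have hc01 : (0:ℤ) ≤ (if 0 < rem then (1:ℤ) else 0) := by split_ifs <;> norm_num
  linarith

lemma arith_bwd (d D : ℤ) (r n : ℕ) (hr : 0 < r) (hrn : r < n)
    (h : ∀ (i : Fin r) (u : Fin (n-r)), -1 ≤ zs (D - d) (n - r) u - zs d r i) :
    -d - (r:ℤ) * ((-D)/(n:ℤ)) ≤ min ((-D) % (n:ℤ)) (r:ℤ) := by
  have hrz : (0:ℤ) < (r:ℤ) := by exact_mod_cast hr
  have hnz : (0:ℤ) < (n:ℤ) := by exact_mod_cast hr.trans hrn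
  have hrn' : (r:ℤ) < (n:ℤ) := by exact_mod_cast hrn
  have hnrz : (0:ℤ) < ((n-r:ℕ):ℤ) := by exact_mod_cast Nat.sub_pos_of_lt hrn
  have hnrc : ((n-r:ℕ):ℤ) = (n:ℤ) - r := by omega
  set A := (-D)/(n:ℤ) with hA
  set ρ := (-D) % (n:ℤ) with hρ
  set q := (-d)/(r:ℤ) with hq
  set rem := (-d) % (r:ℤ) with hrem
  set Q := (d - D)/(((n-r:ℕ)):ℤ) with hQ
  set σ := (d - D) % (((n-r:ℕ)):ℤ) with hσ
  have hd : (r:ℤ) * q + rem = -d := Int.mul_ediv_add_emod _ _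
  have hD : (n:ℤ) * A + ρ = -D := Int.mul_ediv_add_emod _ _
  have hQd : (((n-r:ℕ)):ℤ) * Q + σ = d - D := Int.mul_ediv_add_emod _ _
  have hQd2 : ((n:ℤ) - (r:ℤ))*Q = d - D - σ := by rw [← hnrc]; linarith
  have hrem0 : 0 ≤ rem := Int.emod_nonneg _ (ne_of_gt hrz)
  have hrem1 : rem < r := Int.emod_lt_of_pos _ hrz
  have hρ0 : 0 ≤ ρ := Int.emod_nonneg _ (ne_of_gt hnz)
  have hρ1 : ρ < n := Int.emod_lt_of_pos _ hnz
  have hσ0 : 0 ≤ σ := Int.emod_nonneg _ (ne_of_gt hnrz)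
  have hσ1 : σ < ((n-r:ℕ):ℤ) := Int.emod_lt_of_pos _ hnrz
  have hu : n - r - 1 < n - r := by omega
  have hinst := h ⟨0, hr⟩ ⟨n-r-1, hu⟩
  have hz1 : zs d r ⟨0, hr⟩ = q + (if 0 < rem then 1 else 0) := by
    unfold zs
    rw [← hq, ← hrem]
    have hv : (((⟨0, hr⟩ : Fin r)):ℤ) = 0 := by simp
    rw [hv]
    split_ifs <;> omega
  have hz2 : zs (D - d) (n-r) ⟨n-r-1, hu⟩ = Q := by
    unfold zs
    have hnd : -(D - d) = d - D := by ring
    rw [hnd, ← hQ, ← hσ]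
    have hval : (((⟨n-r-1, hu⟩ : Fin (n-r))):ℤ) = ((n-r:ℕ):ℤ) - 1 := by
      simp only [Fin.val_mk]
      omega
    rw [hval, if_neg (by omega)]
  rw [hz1, hz2] at hinst
  set t := q - A with ht
  have hb1 : (r:ℤ)*t = (r:ℤ)*q - (r:ℤ)*A := by ring
  have hb2 : (n:ℤ)*t = (n:ℤ)*q - (n:ℤ)*A := by ring
  have hQge : q + (if 0 < rem then 1 else 0) - 1 ≤ Q := by linarith
  have hmul : (q + (if 0 < rem then 1 else 0) - 1) * ((n:ℤ) - r) ≤ ((n:ℤ) - r) * Q := by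
    rw [mul_comm ((n:ℤ) - r) Q]
    exact mul_le_mul_of_nonneg_right hQge (by linarith)
  have goal' : (r:ℤ)*t + rem ≤ min ρ (r:ℤ) := by
    rw [le_min_iff]
    split_ifs at hmul with hc
    · -- rem ≥ 1
      have hg : (q + 1 - 1) * ((n:ℤ) - r) = (n:ℤ)*q - (r:ℤ)*q := by ring
      rw [hg] at hmul
      have e0 : (n:ℤ)*t ≤ ρ - rem - σ := by linarith
      have ht0 : t ≤ 0 := by
        by_contra hcon
        push_neg at hcon
        have : (n:ℤ)*1 ≤ (n:ℤ)*t := mul_le_mul_of_nonneg_left (by omega) (le_of_lt hnz)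
        linarith
      constructor
      · rcases ht0.lt_or_eq with h' | h'
        · have : (r:ℤ)*t ≤ (r:ℤ)*(-1) := mul_le_mul_of_nonneg_left (by omega) (le_of_lt hrz)
          linarith
        · have hz2' : (r:ℤ)*t = 0 := by rw [h', mul_zero]
          have hz3' : (n:ℤ)*t = 0 := by rw [h', mul_zero]
          linarith
      · have : (r:ℤ)*t ≤ 0 := mul_nonpos_of_nonneg_of_nonpos (le_of_lt hrz) ht0
        linarith
    · -- rem = 0
      have hrem' : rem = 0 := by omega
      have hg : (q + 0 - 1) * ((n:ℤ) - r) = (n:ℤ)*q - (r:ℤ)*q - (n:ℤ) + (r:ℤ) := by ring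
      rw [hg] at hmul
      have e0 : (n:ℤ)*t ≤ ρ - σ + (n:ℤ) - r := by linarith
      have ht1 : t ≤ 1 := by
        by_contra hcon
        push_neg at hcon
        have : (n:ℤ)*2 ≤ (n:ℤ)*t := mul_le_mul_of_nonneg_left (by omega) (le_of_lt hnz)
        linarith
      rcases (by omega : t ≤ 0 ∨ t = 1) with h' | h'
      · have h5 : (r:ℤ)*t ≤ 0 := mul_nonpos_of_nonneg_of_nonpos (le_of_lt hrz) h'
        constructor <;> linarith
      · have hz1' : (n:ℤ)*t = (n:ℤ) := by rw [h', mul_one]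
        have hz2' : (r:ℤ)*t = (r:ℤ) := by rw [h', mul_one]
        constructor <;> linarith
  linarith

open MvPolynomial in
lemma fwd_main (d D : ℤ) (r n : ℕ) (hr : 0 < r) (hrn : r < n)
    (v : Fin r → ℤ) (M : Fin n → Fin r → MvPolynomial (Fin 2) ℂ)
    (hsum : (∑ i, v i) = -d)
    (hdeg : ∀ j i, (0 ≤ zs D n j - v i → (M j i).IsHomogeneous (zs D n j - v i).toNat) ∧
        (zs D n j - v i < 0 → M j i = 0))
    (hinj : ∀ x : Fin 2 → ℂ, x ≠ 0 → ∀ w : Fin r → ℂ,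
        (∀ j, ∑ i, MvPolynomial.eval x (M j i) * w i = 0) → w = 0) :
    -d ≤ (r:ℤ) * ((-D)/(n:ℤ)) + (-D) % (n:ℤ) ∧
    -d ≤ (r:ℤ) * ((-D)/(n:ℤ)) + r := by
  classical
  have hnz : (0:ℤ) < (n:ℤ) := by exact_mod_cast hr.trans hrn
  set A := (-D)/(n:ℤ) with hA
  set ρ := (-D) % (n:ℤ) with hρ
  have hρ0 : 0 ≤ ρ := Int.emod_nonneg _ (ne_of_gt hnz)
  have hρ1 : ρ < n := Int.emod_lt_of_pos _ hnz
  have hzsle : ∀ j : Fin n, zs D n j ≤ A + 1 := by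
    intro j; unfold zs; rw [← hA, ← hρ]; split_ifs <;> omega
  have hzsA : ∀ j : Fin n, ¬((j:ℤ) < ρ) → zs D n j = A := by
    intro j hj; unfold zs; rw [← hA, ← hρ, if_neg hj]
  set x₀ : Fin 2 → ℂ := fun _ => 1 with hx₀def
  have hx₀ : x₀ ≠ 0 := by
    intro hcon
    have := congrFun hcon 0
    simp [hx₀def] at this
  have hinj0 := hinj x₀ hx₀
  -- every v i ≤ A + 1
  have hv1 : ∀ i, v i ≤ A + 1 := by
    intro i
    by_contra hlt
    push_neg at hlt
    have hzero : ∀ j, M j i = 0 := fun j => (hdeg j i).2 (by have := hzsle j; omega)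
    have hz := hinj0 (Pi.single i 1) (by
      intro j
      rw [Fintype.sum_eq_single i (fun i' hi' => by rw [Pi.single_eq_of_ne hi', mul_zero])]
      rw [hzero j, map_zero, zero_mul])
    have := congrFun hz i
    simp at this
  -- the set of "big" columns
  set S : Finset (Fin r) := Finset.univ.filter (fun i => A + 1 ≤ v i) with hS
  have hMzero : ∀ (i : Fin r), i ∈ S → ∀ j : Fin n, ¬((j:ℤ) < ρ) → M j i = 0 := by
    intro i hi j hj
    refine (hdeg j i).2 ?_
    have h1 := hzsA j hj
    have h2 : A + 1 ≤ v i := (Finset.mem_filter.mp hi).2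
    omega
  -- linear algebra: S.card ≤ ρ
  have hcard : (S.card : ℤ) ≤ ρ := by
    set N : Matrix {j : Fin n // (j:ℤ) < ρ} {i // i ∈ S} ℂ :=
      fun j i => MvPolynomial.eval x₀ (M j.1 i.1) with hN
    have hNinj : Function.Injective N.mulVecLin := by
      rw [← LinearMap.ker_eq_bot, LinearMap.ker_eq_bot']
      intro w hw0
      set w' : Fin r → ℂ := fun i => if h : i ∈ S then w ⟨i, h⟩ else 0 with hw'
      have hw'0 : w' = 0 := by
        apply hinj0
        intro j
        by_cases hj : (j:ℤ) < ρ
        · have hsub : ∑ i, MvPolynomial.eval x₀ (M j i) * w' i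
              = ∑ i ∈ S, MvPolynomial.eval x₀ (M j i) * w' i := by
            refine (Finset.sum_subset (Finset.subset_univ S) ?_).symm
            intro i _ hiS
            rw [show w' i = 0 by simp [hw', hiS], mul_zero]
          rw [hsub, ← Finset.sum_coe_sort S (fun i => MvPolynomial.eval x₀ (M j i) * w' i)]
          have : ∀ i : {i // i ∈ S},
              MvPolynomial.eval x₀ (M j i.1) * w' i.1 = N ⟨j, hj⟩ i * w i := by
            intro i
            simp [hN, hw', i.2]
          rw [Finset.sum_congr rfl (fun i _ => this i)]
          have := congrFun hw0 ⟨j, hj⟩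
          simpa [Matrix.mulVecLin_apply, Matrix.mulVec, dotProduct] using this
        · apply Finset.sum_eq_zero
          intro i _
          by_cases hi : i ∈ S
          · rw [hMzero i hi j hj, map_zero, zero_mul]
          · rw [show w' i = 0 by simp [hw', hi], mul_zero]
      funext i
      have := congrFun hw'0 i.1
      simpa [hw', i.2] using this
    have hle := LinearMap.finrank_le_finrank_of_injective hNinj
    rw [Module.finrank_pi, Module.finrank_pi] at hle
    have h1 : Fintype.card {i // i ∈ S} = S.card := Fintype.card_coe S
    have h2 : Fintype.card {j : Fin n // (j:ℤ) < ρ} ≤ ρ.toNat := by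
      have := Fintype.card_le_of_injective
        (fun j : {j : Fin n // (j:ℤ) < ρ} => (⟨j.1.1, by have := j.2; omega⟩ : Fin ρ.toNat))
        (fun a b hab => by
          apply Subtype.ext
          apply Fin.ext
          simpa using congrArg Fin.val hab)
      simpa using this
    omega
  have hcr : S.card ≤ r := by
    have := Finset.card_filter_le Finset.univ (fun i => A + 1 ≤ v i)
    simpa [hS] using this
  -- sum bound
  have hsum2 : -d ≤ (r:ℤ)*A + S.card := by
    rw [← hsum]
    have hle : ∑ i, v i ≤ ∑ i : Fin r, (A + if i ∈ S then (1:ℤ) else 0) := by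
      apply Finset.sum_le_sum
      intro i _
      by_cases hi : i ∈ S
      · rw [if_pos hi]; have := hv1 i; omega
      · rw [if_neg hi]
        have : ¬(A + 1 ≤ v i) := by simpa [hS] using hi
        omega
    have heq : ∑ i : Fin r, (A + if i ∈ S then (1:ℤ) else 0) = (r:ℤ)*A + S.card := by
      rw [Finset.sum_add_distrib, Finset.sum_const, Finset.sum_ite_mem,
        Finset.univ_inter, Finset.sum_const]
      simp [mul_comm]
    linarith
  constructor
  · have : (S.card : ℤ) ≤ ρ := hcard
    linarith
  · have : (S.card : ℤ) ≤ (r:ℤ) := by exact_mod_cast hcr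
    linarith

open MvPolynomial in
lemma bwd_main (d D : ℤ) (r n : ℕ) (hr : 0 < r) (hrn : r < n)
    (hm0 : -d - (r:ℤ) * ((-D)/(n:ℤ)) ≤ min ((-D) % (n:ℤ)) (r:ℤ)) :
    (∃ (v : Fin r → ℤ) (M : Fin n → Fin r → MvPolynomial (Fin 2) ℂ),
        (∑ i, v i) = -d ∧
        (∀ j i, (0 ≤ zs D n j - v i → (M j i).IsHomogeneous (zs D n j - v i).toNat) ∧
                (zs D n j - v i < 0 → M j i = 0)) ∧
        (∀ x : Fin 2 → ℂ, x ≠ 0 → ∀ w : Fin r → ℂ,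
          (∀ j, ∑ i, MvPolynomial.eval x (M j i) * w i = 0) → w = 0)) := by
  classical
  have hnz : (0:ℤ) < (n:ℤ) := by exact_mod_cast hr.trans hrn
  set A := (-D)/(n:ℤ) with hA
  set ρ := (-D) % (n:ℤ) with hρ
  have hρ0 : 0 ≤ ρ := Int.emod_nonneg _ (ne_of_gt hnz)
  have hρ1 : ρ < n := Int.emod_lt_of_pos _ hnz
  set m : ℤ := -d - (r:ℤ) * A with hm
  set k : ℕ := m.toNat with hk
  have hkm : (k:ℤ) = max m 0 := Int.toNat_of_nonneg (le_max_right m 0) ▸ by omega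
  have hmρ : m ≤ ρ := le_trans hm0 (min_le_left _ _)
  have hmr : m ≤ (r:ℤ) := le_trans hm0 (min_le_right _ _)
  have hkρ : (k:ℤ) ≤ ρ := by omega
  have hkr : k ≤ r := by omega
  have hzs : ∀ j : Fin n, zs D n j = if (j:ℤ) < ρ then A + 1 else A := by
    intro j; unfold zs; rw [← hA, ← hρ]
  have hzsA : ∀ j : Fin n, A ≤ zs D n j := by
    intro j; rw [hzs]; split_ifs <;> omega
  -- the splitting type
  set v : Fin r → ℤ := fun i =>
    A + (if (i:ℕ) < k then 1 else 0) + (if (i:ℕ) = k then min m 0 else 0) with hv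
  have hvK : ∀ i : Fin r, (i:ℕ) < k → v i = A + 1 := by
    intro i h
    simp only [hv]
    rw [if_pos h, if_neg (by omega)]
    ring
  have hvA : ∀ i : Fin r, ¬((i:ℕ) < k) → v i ≤ A := by
    intro i h
    simp only [hv]
    rw [if_neg h]
    split_ifs <;> omega
  -- v i ≤ zs at the two relevant rows
  have hvle : ∀ (i : Fin r) (j : Fin n),
      ((j:ℕ) = (i:ℕ) ∨ ((j:ℕ) = (i:ℕ)+1 ∧ k ≤ (i:ℕ))) → 0 ≤ zs D n j - v i := by
    intro i j hj
    by_cases hik : (i:ℕ) < k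
    · rcases hj with hj | hj
      · have h1 : (j:ℤ) < ρ := by omega
        rw [hzs, if_pos h1, hvK i hik]
        omega
      · omega
    · have := hvA i hik
      have := hzsA j
      omega
  -- the matrix
  set M : Fin n → Fin r → MvPolynomial (Fin 2) ℂ := fun j i =>
    if (j:ℕ) = (i:ℕ) then (X 0 : MvPolynomial (Fin 2) ℂ) ^ ((zs D n j - v i).toNat)
    else if (j:ℕ) = (i:ℕ)+1 ∧ k ≤ (i:ℕ) then (X 1 : MvPolynomial (Fin 2) ℂ) ^ ((zs D n j - v i).toNat)
    else 0 with hM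
  refine ⟨v, M, ?_, ?_, ?_⟩
  · -- sum
    have hsplit : ∀ i : Fin r, v i =
        A + (if (i:ℕ) < k then (1:ℤ) else 0) + (if (i:ℕ) = k then min m 0 else 0) := fun i => rfl
    rw [Finset.sum_congr rfl (fun i _ => hsplit i)]
    rw [Finset.sum_add_distrib, Finset.sum_add_distrib, Finset.sum_const]
    have s2 : ∑ i : Fin r, (if (i:ℕ) < k then (1:ℤ) else 0) = k := by
      rw [Fin.sum_univ_eq_sum_range (fun p => if p < k then (1:ℤ) else 0) r]
      rw [← Finset.sum_subset (Finset.range_subset_range.mpr hkr)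
        (fun p _ hnp => by rw [if_neg (show ¬(p < k) by simp at hnp; omega)])]
      rw [Finset.sum_congr rfl (fun p hp => if_pos (Finset.mem_range.mp hp))]
      simp
    have s3 : ∑ i : Fin r, (if (i:ℕ) = k then min m 0 else 0)
        = if k < r then min m 0 else 0 := by
      by_cases hkr' : k < r
      · rw [if_pos hkr']
        rw [Fintype.sum_eq_single (⟨k, hkr'⟩ : Fin r)
          (fun i hi => if_neg (fun hik => hi (Fin.ext hik)))]
        rw [if_pos rfl]
      · rw [if_neg hkr']
        apply Finset.sum_eq_zero
        intro i _
        rw [if_neg (show ¬((i:ℕ) = k) by have := i.isLt; omega)]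
      
    rw [s2, s3]
    have hmk : (k:ℤ) + (if k < r then min m 0 else 0) = m := by
      split_ifs <;> omega
    simp only [Finset.card_univ, Fintype.card_fin, nsmul_eq_mul]
    omega
  · -- degrees
    intro j i
    constructor
    · intro _
      simp only [hM]
      split_ifs with h1 h2
      · exact isHomogeneous_X_pow _ _
      · exact isHomogeneous_X_pow _ _
      · exact isHomogeneous_zero _ _ _
    · intro hneg
      simp only [hM]
      split_ifs with h1 h2
      · exact absurd (hvle i j (Or.inl h1)) (by omega)
      · exact absurd (hvle i j (Or.inr h2)) (by omega)
      · rfl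
  · -- injectivity
    intro x hx w hw
    have hev : ∀ (j : Fin n) (i : Fin r), MvPolynomial.eval x (M j i) =
        if (j:ℕ) = (i:ℕ) then (x 0) ^ ((zs D n j - v i).toNat)
        else if (j:ℕ) = (i:ℕ)+1 ∧ k ≤ (i:ℕ) then (x 1) ^ ((zs D n j - v i).toNat)
        else 0 := by
      intro j i
      simp only [hM]
      split_ifs <;> simp [map_pow]
    simp only [hev] at hw
    by_cases hx0 : x 0 = 0
    · -- then x 1 ≠ 0 ; go downward
      have hx1 : x 1 ≠ 0 := by
        intro hx1
        apply hx
        funext j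
        fin_cases j
        · exact hx0
        · exact hx1
      have key : ∀ (t p : ℕ) (hp : p < r), r - p ≤ t → w ⟨p, hp⟩ = 0 := by
        intro t
        induction t with
        | zero => intro p hp hle; omega
        | succ t ih =>
          intro p hp hle
          by_cases hpk : p < k
          · -- identity column: use row p
            have hpn : p < n := hp.trans hrn
            have hrow := hw ⟨p, hpn⟩
            have hsingle : ∑ i : Fin r,
                (if ((⟨p, hpn⟩ : Fin n):ℕ) = (i:ℕ) then (x 0) ^ ((zs D n ⟨p, hpn⟩ - v i).toNat)
                 else if ((⟨p, hpn⟩ : Fin n):ℕ) = (i:ℕ)+1 ∧ k ≤ (i:ℕ) then (x 1) ^ ((zs D n ⟨p, hpn⟩ - v i).toNat)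
                 else 0) * w i
                = (if ((⟨p, hpn⟩ : Fin n):ℕ) = ((⟨p, hp⟩ : Fin r):ℕ) then (x 0) ^ ((zs D n ⟨p, hpn⟩ - v ⟨p, hp⟩).toNat)
                   else if ((⟨p, hpn⟩ : Fin n):ℕ) = ((⟨p, hp⟩ : Fin r):ℕ)+1 ∧ k ≤ ((⟨p, hp⟩ : Fin r):ℕ) then (x 1) ^ ((zs D n ⟨p, hpn⟩ - v ⟨p, hp⟩).toNat)
                   else 0) * w ⟨p, hp⟩ := by
              apply Fintype.sum_eq_single
              intro i' hi'
              have hne : (i':ℕ) ≠ p := fun hc => hi' (Fin.ext (by simpa using hc))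
              rw [if_neg (by simpa using fun hc => hne hc.symm), if_neg (by
                rintro ⟨hc1, hc2⟩
                simp only [Fin.val_mk] at hc1
                omega), zero_mul]
            rw [hsingle] at hrow
            rw [if_pos rfl] at hrow
            have hexp : zs D n ⟨p, hpn⟩ - v ⟨p, hp⟩ = 0 := by
              rw [hzs, hvK ⟨p, hp⟩ (by simpa using hpk), if_pos (by simp; omega)]
              ring
            rw [hexp] at hrow
            simpa using hrow
          · -- chain column: use row p+1
            have hpn : p + 1 < n := by omega
            have hrow := hw ⟨p+1, hpn⟩
            have hsingle : ∑ i : Fin r,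
                (if ((⟨p+1, hpn⟩ : Fin n):ℕ) = (i:ℕ) then (x 0) ^ ((zs D n ⟨p+1, hpn⟩ - v i).toNat)
                 else if ((⟨p+1, hpn⟩ : Fin n):ℕ) = (i:ℕ)+1 ∧ k ≤ (i:ℕ) then (x 1) ^ ((zs D n ⟨p+1, hpn⟩ - v i).toNat)
                 else 0) * w i
                = (if ((⟨p+1, hpn⟩ : Fin n):ℕ) = ((⟨p, hp⟩ : Fin r):ℕ) then (x 0) ^ ((zs D n ⟨p+1, hpn⟩ - v ⟨p, hp⟩).toNat)
                   else if ((⟨p+1, hpn⟩ : Fin n):ℕ) = ((⟨p, hp⟩ : Fin r):ℕ)+1 ∧ k ≤ ((⟨p, hp⟩ : Fin r):ℕ) then (x 1) ^ ((zs D n ⟨p+1, hpn⟩ - v ⟨p, hp⟩).toNat)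
                   else 0) * w ⟨p, hp⟩ := by
              apply Fintype.sum_eq_single
              intro i' hi'
              have hne : (i':ℕ) ≠ p := fun hc => hi' (Fin.ext (by simpa using hc))
              by_cases hdiag : ((⟨p+1, hpn⟩ : Fin n):ℕ) = (i':ℕ)
              · rw [if_pos hdiag]
                have hi'r : (i':ℕ) < r := i'.isLt
                have hwz : w i' = 0 := by
                  have := ih (i':ℕ) hi'r (by simp at hdiag; omega)
                  simpa [Fin.eta] using this
                rw [hwz, mul_zero]
              · rw [if_neg hdiag, if_neg (by
                  rintro ⟨hc1, hc2⟩
                  simp only [Fin.val_mk] at hc1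
                  omega), zero_mul]
            rw [hsingle] at hrow
            rw [if_neg (by simp), if_pos ⟨by simp, by simpa using hpk⟩] at hrow
            rcases mul_eq_zero.mp hrow with hcase | hcase
            · exact absurd hcase (pow_ne_zero _ hx1)
            · exact hcase
      funext i
      have := key r i.1 i.isLt (by omega)
      simpa [Fin.eta] using this
    · -- x 0 ≠ 0 : go upward
      have key : ∀ (p : ℕ) (hp : p < r), w ⟨p, hp⟩ = 0 := by
        intro p
        induction p using Nat.strong_induction_on with
        | _ p ih =>
          intro hp
          have hpn : p < n := hp.trans hrn
          have hrow := hw ⟨p, hpn⟩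
          have hsingle : ∑ i : Fin r,
              (if ((⟨p, hpn⟩ : Fin n):ℕ) = (i:ℕ) then (x 0) ^ ((zs D n ⟨p, hpn⟩ - v i).toNat)
               else if ((⟨p, hpn⟩ : Fin n):ℕ) = (i:ℕ)+1 ∧ k ≤ (i:ℕ) then (x 1) ^ ((zs D n ⟨p, hpn⟩ - v i).toNat)
               else 0) * w i
              = (if ((⟨p, hpn⟩ : Fin n):ℕ) = ((⟨p, hp⟩ : Fin r):ℕ) then (x 0) ^ ((zs D n ⟨p, hpn⟩ - v ⟨p, hp⟩).toNat)
                 else if ((⟨p, hpn⟩ : Fin n):ℕ) = ((⟨p, hp⟩ : Fin r):ℕ)+1 ∧ k ≤ ((⟨p, hp⟩ : Fin r):ℕ) then (x 1) ^ ((zs D n ⟨p, hpn⟩ - v ⟨p, hp⟩).toNat)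
                 else 0) * w ⟨p, hp⟩ := by
            apply Fintype.sum_eq_single
            intro i' hi'
            have hne : (i':ℕ) ≠ p := fun hc => hi' (Fin.ext (by simpa using hc))
            rw [if_neg (by simpa using fun hc => hne hc.symm)]
            by_cases hsub : ((⟨p, hpn⟩ : Fin n):ℕ) = (i':ℕ)+1 ∧ k ≤ (i':ℕ)
            · rw [if_pos hsub]
              have hwz : w i' = 0 := by
                have h1 : (i':ℕ) < p := by
                  have := hsub.1
                  simp only [Fin.val_mk] at this
                  omega
                have := ih (i':ℕ) h1 i'.isLt
                simpa [Fin.eta] using this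
              rw [hwz, mul_zero]
            · rw [if_neg hsub, zero_mul]
          rw [hsingle] at hrow
          rw [if_pos rfl] at hrow
          rcases mul_eq_zero.mp hrow with hcase | hcase
          · exact absurd hcase (pow_ne_zero _ hx0)
          · exact hcase
      funext i
      have := key i.1 i.isLt
      simpa [Fin.eta] using this

theorem stmt10 (d D : ℤ) (r n : ℕ) (hr : 0 < r) (hrn : r < n) :
    (∃ (v : Fin r → ℤ) (M : Fin n → Fin r → MvPolynomial (Fin 2) ℂ),
        (∑ i, v i) = -d ∧
        (∀ j i, (0 ≤ zs D n j - v i → (M j i).IsHomogeneous (zs D n j - v i).toNat) ∧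
                (zs D n j - v i < 0 → M j i = 0)) ∧
        (∀ x : Fin 2 → ℂ, x ≠ 0 → ∀ w : Fin r → ℂ,
          (∀ j, ∑ i, MvPolynomial.eval x (M j i) * w i = 0) → w = 0)) ↔
    (∀ (i : Fin r) (u : Fin (n - r)), -1 ≤ zs (D - d) (n - r) u - zs d r i) := by
  constructor
  · rintro ⟨v, M, hsum, hdeg, hinj⟩
    obtain ⟨h1, h2⟩ := fwd_main d D r n hr hrn v M hsum hdeg hinj
    exact arith_fwd d D r n hr hrn h1 h2
  · intro h
    exact bwd_main d D r n hr hrn (arith_bwd d D r n hr hrn h)
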